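/- arXiv:1503.00895 — 5 statements merged into one kernel-verified Lean document; each statement's English description precedes it below -/
import Mathlib

section
/- Let n and n+p be relatively prime positive integers and t_k = kπ/(n(n+p)) for 0 ≤ k ≤ n(n+p). For integers i, j ≥ 0 with i/(n+p) + j/n < 1, setting k = in + j(n+p) and k' = |in − j(n+p)|, one has γ(t_k) = γ(t_{k'}), where γ(t) = (cos(nt), cos((n+p)t)). -/
open Real

theorem lissajous_selfintersection_nodes (n p : ℕ) (hn : 0 < n) (hp : 0 < p)
    (hcop : Nat.Coprime n (n + p))
    (γ : ℝ → ℝ × ℝ)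
    (hγ : ∀ t, γ t = (Real.cos (n * t), Real.cos ((n + p) * t)))
    (tk : ℕ → ℝ) (htk : ∀ k, tk k = k * π / (n * (n + p)))
    (i j : ℕ) (hij : (i : ℝ) / (n + p) + (j : ℝ) / n < 1) :
    γ (tk (i * n + j * (n + p))) = γ (tk ((i * n : ℤ) - j * (n + p)).natAbs) := by
  have hn' : (0:ℝ) < n := by exact_mod_cast hn
  have hnp' : (0:ℝ) < (n:ℝ) + p := by positivity
  set x : ℝ := (i:ℝ)*n - j*(n+p) with hx
  have habs : ((((i * n : ℤ) - j * (n+p)).natAbs : ℕ) : ℝ) = |x| := by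
    rw [Nat.cast_natAbs]
    push_cast
    rfl
  rw [hγ, hγ, htk, htk, habs]
  have hcos : ∀ (c : ℝ), 0 ≤ c → Real.cos (|x| * c) = Real.cos (x * c) := by
    intro c hc
    rw [show |x| * c = |x * c| by rw [abs_mul, abs_of_nonneg hc], Real.cos_abs]
  have e1 : (n:ℝ) * (|x| * π / ((n:ℝ) * ((n:ℝ)+p))) = |x| * (π/((n:ℝ)+p)) := by
    field_simp
  have e2 : ((n:ℝ)+p) * (|x| * π / ((n:ℝ) * ((n:ℝ)+p))) = |x| * (π/(n:ℝ)) := by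
    field_simp
  have e1' : (n:ℝ) * ((((i * n + j * (n + p) : ℕ)):ℝ) * π / ((n:ℝ) * ((n:ℝ)+p)))
      = ((i:ℝ)*n + j*(n+p)) * (π/((n:ℝ)+p)) := by
    push_cast; field_simp
  have e2' : ((n:ℝ)+p) * ((((i * n + j * (n + p) : ℕ)):ℝ) * π / ((n:ℝ) * ((n:ℝ)+p)))
      = ((i:ℝ)*n + j*(n+p)) * (π/(n:ℝ)) := by
    push_cast; field_simp
  have g1 : (((i:ℝ)*n + j*(n+p)) * (π/((n:ℝ)+p))) = x * (π/((n:ℝ)+p)) + (j:ℤ) * (2*π) := by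
    rw [hx]; push_cast; field_simp; ring
  have g2 : (((i:ℝ)*n + j*(n+p)) * (π/(n:ℝ))) = -(x * (π/(n:ℝ))) + (i:ℤ) * (2*π) := by
    rw [hx]; push_cast; field_simp; ring
  have d1 : (0:ℝ) ≤ π/((n:ℝ)+p) := by positivity
  have d2 : (0:ℝ) ≤ π/(n:ℝ) := by positivity
  rw [e1, e2, e1', e2', hcos _ d1, hcos _ d2, g1, g2,
    Real.cos_add_int_mul_two_pi, Real.cos_add_int_mul_two_pi, Real.cos_neg]
end

section
/- Let n and n+p be relatively prime positive integers. The set of points γ(t_k) for k = 0, …, n(n+p), where γ(t) = (cos(nt), cos((n+p)t)) and t_k = kπ/(n(n+p)), equals the set of points (cos(iπ/(n+p)), cos(jπ/n)) with 0 ≤ i ≤ n+p, 0 ≤ j ≤ n, and i + j even. -/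
open Real

private lemma cos_congr_pos {m a b : ℕ} (hm : 0 < m)
    (h : (a : ℤ) ≡ (b : ℤ) [ZMOD (2 * (m : ℤ))]) :
    Real.cos (a * π / m) = Real.cos (b * π / m) := by
  have hm' : (m : ℝ) ≠ 0 := Nat.cast_ne_zero.mpr hm.ne'
  obtain ⟨q, hq⟩ := h.dvd
  have hb : (b : ℝ) = a + 2 * m * q := by
    have h2 := congrArg (fun z : ℤ => (z : ℝ)) hq
    push_cast at h2; linarith
  have key : (b : ℝ) * π / m = a * π / m + q * (2 * π) := by
    rw [hb]; field_simp
  rw [key, Real.cos_add_int_mul_two_pi]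

private lemma cos_congr_neg {m a b : ℕ} (hm : 0 < m)
    (h : (a : ℤ) ≡ -(b : ℤ) [ZMOD (2 * (m : ℤ))]) :
    Real.cos (a * π / m) = Real.cos (b * π / m) := by
  have hm' : (m : ℝ) ≠ 0 := Nat.cast_ne_zero.mpr hm.ne'
  obtain ⟨q, hq⟩ := h.dvd
  have ha : (a : ℝ) = -b - 2 * m * q := by
    have h2 := congrArg (fun z : ℤ => (z : ℝ)) hq
    push_cast at h2; linarith
  have hcs := Real.cos_int_mul_two_pi_sub ((b:ℝ) * π / m) (-q)
  push_cast at hcs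
  have key : (a : ℝ) * π / m = -q * (2 * π) - b * π / m := by
    rw [ha]; field_simp; ring
  rw [key, hcs]

private lemma fold_exists (m k : ℕ) (hm : 0 < m) :
    ∃ i ≤ m, i % 2 = k % 2 ∧
      (((i : ℤ) ≡ (k : ℤ) [ZMOD (2 * (m:ℤ))]) ∨
        ((i : ℤ) ≡ -(k : ℤ) [ZMOD (2 * (m:ℤ))])) := by
  set r := k % (2 * m) with hr
  have hr2 : r < 2 * m := Nat.mod_lt _ (by omega)
  have hrk2 : r % 2 = k % 2 := by
    rw [hr, Nat.mod_mod_of_dvd _ ⟨m, rfl⟩]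
  have hrkN : r ≡ k [MOD 2 * m] := by
    unfold Nat.ModEq
    exact Nat.mod_mod_of_dvd k dvd_rfl
  have hrkZ : (r : ℤ) ≡ (k : ℤ) [ZMOD ((2 * m : ℕ) : ℤ)] :=
    Int.natCast_modEq_iff.mpr hrkN
  have hrkZ' : (r : ℤ) ≡ (k : ℤ) [ZMOD 2 * (m:ℤ)] := by
    have : ((2 * m : ℕ) : ℤ) = 2 * (m : ℤ) := by push_cast; ring
    rwa [this] at hrkZ
  by_cases hc : r ≤ m
  · exact ⟨r, hc, hrk2, Or.inl hrkZ'⟩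
  · refine ⟨2 * m - r, by omega, by omega, Or.inr ?_⟩
    have hcast : ((2 * m - r : ℕ) : ℤ) = 2 * (m : ℤ) - r := by
      push_cast [Nat.cast_sub hr2.le]; ring
    rw [hcast]
    calc (2 * (m : ℤ) - r) ≡ 0 - r [ZMOD 2 * (m:ℤ)] :=
          Int.ModEq.sub_right _ (Int.modEq_zero_iff_dvd.mpr dvd_rfl)
      _ = -(r : ℤ) := by ring
      _ ≡ -(k : ℤ) [ZMOD 2 * (m:ℤ)] := hrkZ'.neg

theorem lissajous_nodes_eq_cgl_grid (n p : ℕ) (hn : 0 < n) (hp : 0 < p)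
    (hcop : Nat.Coprime n (n + p))
    (γ : ℝ → ℝ × ℝ)
    (hγ : ∀ t, γ t = (Real.cos (n * t), Real.cos ((n + p) * t)))
    (tk : ℕ → ℝ) (htk : ∀ k, tk k = k * π / (n * (n + p))) :
    {A : ℝ × ℝ | ∃ k ≤ n * (n + p), A = γ (tk k)} =
      {A : ℝ × ℝ | ∃ i ≤ n + p, ∃ j ≤ n, Even (i + j) ∧
        A = (Real.cos (i * π / (n + p)), Real.cos (j * π / n))} := by
  have hn' : (n : ℝ) ≠ 0 := Nat.cast_ne_zero.mpr hn.ne'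
  have hnp : 0 < n + p := by omega
  have hnp' : ((n + p : ℕ) : ℝ) ≠ 0 := Nat.cast_ne_zero.mpr hnp.ne'
  have hγtk : ∀ k : ℕ, γ (tk k) =
      (Real.cos (k * π / ((n + p : ℕ) : ℝ)), Real.cos (k * π / (n : ℝ))) := by
    intro k
    rw [hγ, htk]
    have h1 : (n : ℝ) * ((k : ℝ) * π / (n * (n + p))) = k * π / ((n + p : ℕ) : ℝ) := by
      push_cast
      field_simp
    have h2 : ((n : ℝ) + p) * ((k : ℝ) * π / (n * (n + p))) = k * π / (n : ℝ) := by
      have hnpR : (n : ℝ) + p ≠ 0 := by push_cast at hnp' ⊢; exact hnp'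
      field_simp
    rw [h1, h2]
  ext A
  simp only [Set.mem_setOf_eq]
  constructor
  · rintro ⟨k, hk, rfl⟩
    obtain ⟨i, hi, hi2, hicong⟩ := fold_exists (n + p) k hnp
    obtain ⟨j, hj, hj2, hjcong⟩ := fold_exists n k hn
    refine ⟨i, hi, j, hj, ?_, ?_⟩
    · rw [Nat.even_iff]; omega
    · rw [hγtk]
      have c1 : Real.cos ((i : ℝ) * π / ((n + p : ℕ) : ℝ))
          = Real.cos ((k : ℝ) * π / ((n + p : ℕ) : ℝ)) := by
        rcases hicong with h | h
        · exact cos_congr_pos hnp h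
        · exact cos_congr_neg hnp h
      have c2 : Real.cos ((j : ℝ) * π / (n : ℝ))
          = Real.cos ((k : ℝ) * π / (n : ℝ)) := by
        rcases hjcong with h | h
        · exact cos_congr_pos hn h
        · exact cos_congr_neg hn h
      have : ((n : ℝ) + p) = ((n + p : ℕ) : ℝ) := by push_cast; ring
      rw [this, ← c1, ← c2]
  · rintro ⟨i, hi, j, hj, hev, rfl⟩
    -- construct k via CRT
    haveI : NeZero n := ⟨hn.ne'⟩
    have hcop' : Nat.Coprime (n + p) n := (Nat.coprime_comm.mp hcop)
    have hunit : IsUnit ((n + p : ℕ) : ZMod n) := by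
      rw [ZMod.isUnit_iff_coprime]; exact hcop'
    have h2e : (2 : ℤ) ∣ ((j : ℤ) - i) := by
      obtain ⟨c, hc⟩ := hev
      omega
    obtain ⟨e, he⟩ := h2e
    set s : ℕ := ((((n + p : ℕ) : ZMod n))⁻¹ * (e : ZMod n)).val with hs
    have hslt : s < n := ZMod.val_lt _
    have hse : ((n + p : ℕ) : ℤ) * s ≡ e [ZMOD (n : ℤ)] := by
      rw [← ZMod.intCast_eq_intCast_iff]
      push_cast
      rw [hs, ZMod.natCast_val, ZMod.cast_id]
      rw [show ((n:ZMod n) + p) = (((n + p : ℕ) : ZMod n)) by push_cast; ring]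
      rw [← mul_assoc, ZMod.mul_inv_of_unit _ hunit, one_mul]
    set K : ℕ := i + 2 * (n + p) * s with hK
    have hKi : (K : ℤ) ≡ (i : ℤ) [ZMOD 2 * ((n + p : ℕ) : ℤ)] := by
      have : (2 * ((n + p : ℕ) : ℤ)) ∣ ((i : ℤ) - K) := by
        push_cast [hK]
        exact ⟨-s, by push_cast; ring⟩
      exact (Int.modEq_iff_dvd.mpr this)
    have hKj : (K : ℤ) ≡ (j : ℤ) [ZMOD 2 * ((n : ℕ) : ℤ)] := by
      obtain ⟨c, hc⟩ := hse.dvd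
      have hc' : e - ((n:ℤ) + p) * s = n * c := by push_cast at hc; linarith
      have : (2 * ((n : ℕ) : ℤ)) ∣ ((j : ℤ) - K) := by
        refine ⟨c, ?_⟩
        push_cast [hK]
        linarith [he, hc']
      exact (Int.modEq_iff_dvd.mpr this)
    have hKlt : K < 2 * (n * (n + p)) := by
      have h1 : s + 1 ≤ n := hslt
      have h2 : 2 * (n + p) * (s + 1) ≤ 2 * (n + p) * n := Nat.mul_le_mul_left _ h1
      have h3 : 2 * (n + p) * (s + 1) = 2 * (n + p) * s + 2 * (n + p) := by ring
      have h4 : 2 * (n + p) * n = 2 * (n * (n + p)) := by ring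
      omega
    by_cases hKle : K ≤ n * (n + p)
    · refine ⟨K, hKle, ?_⟩
      rw [hγtk]
      have c1 := cos_congr_pos hnp hKi
      have c2 := cos_congr_pos hn hKj
      have hcc : ((n : ℝ) + p) = ((n + p : ℕ) : ℝ) := by push_cast; ring
      rw [hcc, c1, c2]
    · refine ⟨2 * (n * (n + p)) - K, by omega, ?_⟩
      rw [hγtk]
      set k := 2 * (n * (n + p)) - K with hk
      have hkZ : (k : ℤ) = 2 * (n * (n + p) : ℕ) - K := by
        push_cast [hk, Nat.cast_sub hKlt.le]; ring
      have hki : (k : ℤ) ≡ -(i : ℤ) [ZMOD 2 * ((n + p : ℕ) : ℤ)] := by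
        rw [hkZ]
        have h0 : (2 * ((n * (n + p) : ℕ) : ℤ)) ≡ 0 [ZMOD 2 * ((n + p : ℕ) : ℤ)] :=
          Int.modEq_zero_iff_dvd.mpr ⟨n, by push_cast; ring⟩
        calc (2 * ((n * (n + p) : ℕ) : ℤ) - K) ≡ 0 - K [ZMOD 2 * ((n + p : ℕ) : ℤ)] :=
              h0.sub_right _
          _ = -(K : ℤ) := by ring
          _ ≡ -(i : ℤ) [ZMOD 2 * ((n + p : ℕ) : ℤ)] := hKi.neg
      have hkj : (k : ℤ) ≡ -(j : ℤ) [ZMOD 2 * ((n : ℕ) : ℤ)] := by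
        rw [hkZ]
        have h0 : (2 * ((n * (n + p) : ℕ) : ℤ)) ≡ 0 [ZMOD 2 * ((n : ℕ) : ℤ)] :=
          Int.modEq_zero_iff_dvd.mpr ⟨n + p, by push_cast; ring⟩
        calc (2 * ((n * (n + p) : ℕ) : ℤ) - K) ≡ 0 - K [ZMOD 2 * ((n : ℕ) : ℤ)] :=
              h0.sub_right _
          _ = -(K : ℤ) := by ring
          _ ≡ -(j : ℤ) [ZMOD 2 * ((n : ℕ) : ℤ)] := hKj.neg
      have c1 := cos_congr_neg hnp hki
      have c2 := cos_congr_neg hn hkj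
      have hcc : ((n : ℝ) + p) = ((n + p : ℕ) : ℝ) := by push_cast; ring
      rw [hcc, c1, c2]
end

section
/- Let n, p be positive integers with gcd(n, n+p) = 1. The curve γ(t) = (cos(nt), cos((n+p)t)), t ∈ [0,π], meets the boundary of the square [−1,1]² (i.e., points where the first coordinate is ±1 or the second coordinate is ±1) at exactly 2n + p distinct points. -/
open Real


lemma cosNatPi (k : ℕ) : Real.cos (k * π) = (-1 : ℝ) ^ k := by
  induction k with
  | zero => simp
  | succ k ih =>
    push_cast
    rw [add_mul, one_mul, Real.cos_add_pi, ih]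
    ring

lemma parity {a b : ℕ} (h : Real.cos (a * π) = Real.cos (b * π)) : a % 2 = b % 2 := by
  rw [cosNatPi, cosNatPi] at h
  rcases Nat.even_or_odd a with ha | ha <;> rcases Nat.even_or_odd b with hb | hb <;>
    simp only [ha.neg_one_pow, hb.neg_one_pow] at h <;>
    first
      | (rw [Nat.even_iff] at *; omega)
      | (rw [Nat.odd_iff] at *; omega)
      | norm_num at h


lemma notBothEven {n m : ℕ} (hcop : Nat.Coprime n m) (h1 : 2 ∣ n) (h2 : 2 ∣ m) : False := by
  have := Nat.dvd_gcd h1 h2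
  rw [Nat.Coprime] at hcop
  omega


lemma keyInj (n m : ℕ) (hn : 0 < n) (hcop : Nat.Coprime n m)
    (k k' : ℕ) (hk : k ≤ n) (hk' : k' ≤ n)
    (h1 : Real.cos (k * π) = Real.cos (k' * π))
    (h2 : Real.cos (m * k * π / n) = Real.cos (m * k' * π / n)) : k = k' := by
  have hn' : (n:ℝ) ≠ 0 := Nat.cast_ne_zero.mpr hn.ne'
  have hπ : (π:ℝ) ≠ 0 := Real.pi_ne_zero
  have hpar : k % 2 = k' % 2 := parity h1
  have hco : IsCoprime (n:ℤ) (m:ℤ) := Int.isCoprime_iff_gcd_eq_one.mpr hcop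
  rw [Real.cos_eq_cos_iff] at h2
  obtain ⟨l, hl | hl⟩ := h2
  · have key : (m:ℤ) * k' = 2 * l * n + m * k := by
      have hr : ((m:ℝ) * k') * π = (2 * (l:ℝ) * n + m * k) * π := by
        field_simp at hl
        ring_nf at hl ⊢
        linear_combination π * hl
      have := mul_right_cancel₀ hπ hr
      exact_mod_cast this
    have hdvd : (n:ℤ) ∣ (m : ℤ) * ((k':ℤ) - k) := ⟨2 * l, by linarith [key]⟩
    obtain ⟨c, hc⟩ := hco.dvd_of_dvd_mul_left hdvd
    have hc1 : c ≤ 1 := by nlinarith [hc, (by exact_mod_cast hk' : (k':ℤ) ≤ n), (by exact_mod_cast hn : (0:ℤ) < n), (by positivity : (0:ℤ) ≤ (k:ℤ))]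
    have hc2 : -1 ≤ c := by nlinarith [hc, (by exact_mod_cast hk : (k:ℤ) ≤ n), (by exact_mod_cast hn : (0:ℤ) < n), (by positivity : (0:ℤ) ≤ (k':ℤ))]
    interval_cases c
    · -- k' - k = -n : k = n, k' = 0
      have hk0 : k = n ∧ k' = 0 := by constructor <;> omega
      exfalso
      obtain ⟨e1, e2⟩ := hk0
      rw [e1, e2] at key
      have : ((2:ℤ) * l + m) * n = 0 := by push_cast at key ⊢; linarith
      have h2l : (2:ℤ) * l + m = 0 := by
        rcases mul_eq_zero.mp this with h | h
        · exact h
        · exact absurd h (by exact_mod_cast hn.ne')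
      have hme : 2 ∣ m := by
        have : (2:ℤ) ∣ (m:ℤ) := ⟨-l, by linarith⟩
        exact_mod_cast this
      have hne : 2 ∣ n := by omega
      exact notBothEven hcop hne hme
    · omega
    · have hk0 : k = 0 ∧ k' = n := by constructor <;> omega
      exfalso
      obtain ⟨e1, e2⟩ := hk0
      rw [e1, e2] at key
      have : ((m:ℤ) - 2 * l) * n = 0 := by push_cast at key ⊢; linarith
      have h2l : (m:ℤ) = 2 * l := by
        rcases mul_eq_zero.mp this with h | h
        · linarith
        · exact absurd h (by exact_mod_cast hn.ne')
      have hme : 2 ∣ m := by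
        have : (2:ℤ) ∣ (m:ℤ) := ⟨l, h2l⟩
        exact_mod_cast this
      have hne : 2 ∣ n := by omega
      exact notBothEven hcop hne hme
  · have key : (m:ℤ) * k' = 2 * l * n - m * k := by
      have hr : ((m:ℝ) * k') * π = (2 * (l:ℝ) * n - m * k) * π := by
        field_simp at hl
        ring_nf at hl ⊢
        linear_combination π * hl
      have := mul_right_cancel₀ hπ hr
      exact_mod_cast this
    have hdvd : (n:ℤ) ∣ (m : ℤ) * ((k':ℤ) + k) := ⟨2 * l, by linarith [key]⟩
    obtain ⟨c, hc⟩ := hco.dvd_of_dvd_mul_left hdvd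
    have hc1 : c ≤ 2 := by nlinarith [hc, (by exact_mod_cast hk' : (k':ℤ) ≤ n), (by exact_mod_cast hk : (k:ℤ) ≤ n), (by exact_mod_cast hn : (0:ℤ) < n)]
    have hc2 : 0 ≤ c := by nlinarith [hc, (by exact_mod_cast hn : (0:ℤ) < n), (by positivity : (0:ℤ) ≤ (k':ℤ)), (by positivity : (0:ℤ) ≤ (k:ℤ))]
    interval_cases c
    · omega
    · -- k + k' = n
      exfalso
      have hsum : (k:ℤ) + k' = n := by omega
      -- key : m k' = 2 l n - m k  → m n = 2 l n → m = 2l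
      have : ((m:ℤ) - 2 * l) * n = 0 := by nlinarith [key, hsum]
      have h2l : (m:ℤ) = 2 * l := by
        rcases mul_eq_zero.mp this with h | h
        · linarith
        · exact absurd h (by exact_mod_cast hn.ne')
      have hme : 2 ∣ m := by
        have : (2:ℤ) ∣ (m:ℤ) := ⟨l, h2l⟩
        exact_mod_cast this
      have hne : 2 ∣ n := by omega
      exact notBothEven hcop hne hme
    · omega



lemma absCosOne {x : ℝ} (h : |Real.cos x| = 1) : ∃ k : ℤ, (k : ℝ) * π = x := by
  rw [← Real.sin_eq_zero_iff]
  have h2 : Real.cos x ^ 2 = 1 := by rw [← sq_abs, h]; norm_num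
  nlinarith [Real.sin_sq_add_cos_sq x, sq_nonneg (Real.sin x)]

lemma dvdOfCos (a b : ℕ) (hb : 0 < b) (h : |Real.cos ((a:ℝ) * π / b)| = 1) : b ∣ a := by
  obtain ⟨l, hl⟩ := absCosOne h
  have hb' : (b:ℝ) ≠ 0 := Nat.cast_ne_zero.mpr hb.ne'
  have key : (l:ℤ) * b = a := by
    have hr : ((l:ℝ) * b) * π = (a:ℝ) * π := by
      field_simp at hl
      linear_combination π * hl
    have := mul_right_cancel₀ Real.pi_ne_zero hr
    exact_mod_cast this
  have : (b:ℤ) ∣ (a:ℤ) := ⟨l, by linarith [key]⟩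
  exact_mod_cast this

lemma ABfalse (n m : ℕ) (hn : 0 < n) (hm : 0 < m) (hcop : Nat.Coprime n m)
    (k j : ℕ) (hk : k < n) (hj1 : 1 ≤ j) (hj : j ≤ m)
    (h1 : Real.cos (k * π) = Real.cos (n * j * π / m))
    (h2 : Real.cos (m * k * π / n) = Real.cos (j * π)) : False := by
  have hm' : (m:ℝ) ≠ 0 := Nat.cast_ne_zero.mpr hm.ne'
  have hn' : (n:ℝ) ≠ 0 := Nat.cast_ne_zero.mpr hn.ne'
  have ha1 : |Real.cos ((n*j : ℕ) * π / m)| = 1 := by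
    push_cast
    rw [← h1, cosNatPi]
    simp
  have hmj : m ∣ n * j := dvdOfCos (n*j) m hm ha1
  have hmj' : m ∣ j := Nat.Coprime.dvd_of_dvd_mul_left hcop.symm hmj
  have hjm : j = m := by
    have := Nat.le_of_dvd (by omega) hmj'
    omega
  have ha2 : |Real.cos ((m*k : ℕ) * π / n)| = 1 := by
    push_cast
    rw [h2, cosNatPi]
    simp
  have hnk : n ∣ m * k := dvdOfCos (m*k) n hn ha2
  have hnk' : n ∣ k := Nat.Coprime.dvd_of_dvd_mul_left hcop hnk
  have hk0 : k = 0 := by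
    rcases Nat.eq_zero_or_pos k with h | h
    · exact h
    · have := Nat.le_of_dvd h hnk'
      omega
  have hA : Real.cos ((n:ℝ) * j * π / m) = (-1:ℝ)^n := by
    rw [hjm, show (n:ℝ) * (m:ℕ) * π / (m:ℕ) = (n:ℕ) * π by field_simp]
    exact cosNatPi n
  have hB : Real.cos ((k:ℝ) * π) = 1 := by rw [hk0]; norm_num
  have hC : Real.cos ((m:ℝ) * k * π / n) = 1 := by rw [hk0]; norm_num
  have hD : Real.cos ((j:ℝ) * π) = (-1:ℝ)^m := by rw [hjm]; exact cosNatPi m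
  rw [hA, hB] at h1
  rw [hC, hD] at h2
  have hn2 : 2 ∣ n := by
    rcases Nat.even_or_odd n with he | ho
    · exact he.two_dvd
    · rw [ho.neg_one_pow] at h1; norm_num at h1
  have hm2 : 2 ∣ m := by
    rcases Nat.even_or_odd m with he | ho
    · exact he.two_dvd
    · rw [ho.neg_one_pow] at h2; norm_num at h2
  exact notBothEven hcop hn2 hm2



lemma count (n m : ℕ) (hn : 0 < n) (hm : 0 < m) (hcop : Nat.Coprime n m) :
    Set.ncard {A : ℝ × ℝ | (∃ t ∈ Set.Icc (0:ℝ) π,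
        (Real.cos (n * t), Real.cos (m * t)) = A) ∧ (|A.1| = 1 ∨ |A.2| = 1)} = n + m := by
  have hπ := Real.pi_pos
  have hπ' := Real.pi_ne_zero
  have hn' : (n:ℝ) ≠ 0 := Nat.cast_ne_zero.mpr hn.ne'
  have hm' : (m:ℝ) ≠ 0 := Nat.cast_ne_zero.mpr hm.ne'
  have hnpos : (0:ℝ) < n := by positivity
  have hmpos : (0:ℝ) < m := by positivity
  -- cancellation identities
  have en : ∀ k : ℕ, (n:ℝ) * ((k:ℝ) * π / n) = (k:ℝ) * π := by
    intro k; field_simp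
  have em : ∀ j : ℕ, (m:ℝ) * ((j:ℝ) * π / m) = (j:ℝ) * π := by
    intro j; field_simp
  have enm : ∀ k : ℕ, (m:ℝ) * ((k:ℝ) * π / n) = (m:ℝ) * k * π / n := by
    intro k; ring
  have emn : ∀ j : ℕ, (n:ℝ) * ((j:ℝ) * π / m) = (n:ℝ) * j * π / m := by
    intro j; ring
  set F : ℝ → ℝ × ℝ := fun t => (Real.cos (n * t), Real.cos (m * t)) with hF
  set T : Finset ℝ := ((Finset.range n).image fun k : ℕ => (k:ℝ) * π / n) ∪
      ((Finset.Icc 1 m).image fun j : ℕ => (j:ℝ) * π / m) with hT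
  have memT : ∀ x : ℝ, x ∈ T ↔ (∃ k : ℕ, k < n ∧ (k:ℝ) * π / n = x) ∨
      (∃ j : ℕ, (1 ≤ j ∧ j ≤ m) ∧ (j:ℝ) * π / m = x) := by
    intro x
    simp [hT, Finset.mem_union, Finset.mem_image, Finset.mem_range, Finset.mem_Icc]
  -- the set equals the image finset
  have hseteq : {A : ℝ × ℝ | (∃ t ∈ Set.Icc (0:ℝ) π,
      (Real.cos (n * t), Real.cos (m * t)) = A) ∧ (|A.1| = 1 ∨ |A.2| = 1)}
      = ↑(T.image F) := by
    ext A
    simp only [Set.mem_setOf_eq, Finset.coe_image, Set.mem_image, Finset.mem_coe]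
    constructor
    · rintro ⟨⟨t, ht, hFt⟩, hb⟩
      refine ⟨t, ?_, hFt⟩
      rw [memT]
      obtain ⟨ht0, ht1⟩ := ht
      rcases hb with hb | hb
      · have hA1 : A.1 = Real.cos ((n:ℝ) * t) := by rw [← hFt]
        rw [hA1] at hb
        obtain ⟨l, hl⟩ := absCosOne hb
        have hl0 : (0:ℝ) ≤ l := by nlinarith
        have hln : (l:ℝ) ≤ n := by nlinarith
        have hl0' : 0 ≤ l := by exact_mod_cast hl0
        obtain ⟨k, rfl⟩ := Int.eq_ofNat_of_zero_le hl0'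
        have hkn : k ≤ n := by exact_mod_cast hln
        have htk : t = (k:ℝ) * π / n := by
          rw [eq_div_iff hn']
          push_cast at hl
          linarith
        rcases lt_or_eq_of_le hkn with h | h
        · exact Or.inl ⟨k, h, htk.symm⟩
        · refine Or.inr ⟨m, ⟨hm, le_refl m⟩, ?_⟩
          rw [htk, h]
          field_simp
        -- done
      · have hA2 : A.2 = Real.cos ((m:ℝ) * t) := by rw [← hFt]
        rw [hA2] at hb
        obtain ⟨l, hl⟩ := absCosOne hb
        have hl0 : (0:ℝ) ≤ l := by nlinarith
        have hlm : (l:ℝ) ≤ m := by nlinarith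
        have hl0' : 0 ≤ l := by exact_mod_cast hl0
        obtain ⟨j, rfl⟩ := Int.eq_ofNat_of_zero_le hl0'
        have hjm : j ≤ m := by exact_mod_cast hlm
        have htj : t = (j:ℝ) * π / m := by
          rw [eq_div_iff hm']
          push_cast at hl
          linarith
        rcases Nat.eq_zero_or_pos j with h | h
        · refine Or.inl ⟨0, hn, ?_⟩
          rw [htj, h]
          norm_num
        · exact Or.inr ⟨j, ⟨h, hjm⟩, htj.symm⟩
    · rintro ⟨s, hs, rfl⟩
      rw [memT] at hs
      rcases hs with ⟨k, hk, rfl⟩ | ⟨j, ⟨hj1, hjm⟩, rfl⟩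
      · constructor
        · refine ⟨(k:ℝ) * π / n, ⟨by positivity, ?_⟩, rfl⟩
          rw [div_le_iff₀ hnpos]
          have : (k:ℝ) ≤ n := by exact_mod_cast hk.le
          nlinarith
        · left
          show |Real.cos ((n:ℝ) * ((k:ℝ) * π / n))| = 1
          rw [en k, cosNatPi]
          simp
      · constructor
        · refine ⟨(j:ℝ) * π / m, ⟨by positivity, ?_⟩, rfl⟩
          rw [div_le_iff₀ hmpos]
          have : (j:ℝ) ≤ m := by exact_mod_cast hjm
          nlinarith
        · right
          show |Real.cos ((m:ℝ) * ((j:ℝ) * π / m))| = 1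
          rw [em j, cosNatPi]
          simp
  rw [hseteq, Set.ncard_coe_finset]
  have hinj : Set.InjOn F ↑T := by
    intro s hs t ht hFst
    have h1 : Real.cos ((n:ℝ) * s) = Real.cos ((n:ℝ) * t) := congrArg Prod.fst hFst
    have h2 : Real.cos ((m:ℝ) * s) = Real.cos ((m:ℝ) * t) := congrArg Prod.snd hFst
    rw [Finset.mem_coe, memT] at hs ht
    rcases hs with ⟨k, hk, rfl⟩ | ⟨j, ⟨hj1, hjm⟩, rfl⟩ <;>
      rcases ht with ⟨k', hk', rfl⟩ | ⟨j', ⟨hj1', hjm'⟩, rfl⟩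
    · rw [en, en] at h1
      rw [enm, enm] at h2
      have := keyInj n m hn hcop k k' hk.le hk'.le h1 h2
      rw [this]
    · rw [en, emn] at h1
      rw [enm, em] at h2
      exact absurd (ABfalse n m hn hm hcop k j' hk hj1' hjm' h1 h2) id
    · rw [emn, en] at h1
      rw [em, enm] at h2
      exact absurd (ABfalse n m hn hm hcop k' j hk' hj1 hjm h1.symm h2.symm) id
    · rw [emn, emn] at h1
      rw [em, em] at h2
      have := keyInj m n hm hcop.symm j j' hjm hjm' h2 h1
      rw [this]
  rw [Finset.card_image_of_injOn hinj, hT]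
  have hdisj : Disjoint ((Finset.range n).image fun k : ℕ => (k:ℝ) * π / n)
      ((Finset.Icc 1 m).image fun j : ℕ => (j:ℝ) * π / m) := by
    rw [Finset.disjoint_left]
    intro x hx1 hx2
    simp only [Finset.mem_image, Finset.mem_range, Finset.mem_Icc] at hx1 hx2
    obtain ⟨k, hk, rfl⟩ := hx1
    obtain ⟨j, ⟨hj1, hjm⟩, hEq⟩ := hx2
    have hreal : ((j:ℝ) * n) * π = ((k:ℝ) * m) * π := by
      rw [div_eq_div_iff hm' hn'] at hEq
      linear_combination hEq
    have hnat : j * n = k * m := by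
      have := mul_right_cancel₀ hπ' hreal
      exact_mod_cast this
    have hdvd : n ∣ k * m := by rw [← hnat]; exact ⟨j, by ring⟩
    have hk0 : k = 0 := by
      have hnk := Nat.Coprime.dvd_of_dvd_mul_right hcop hdvd
      rcases Nat.eq_zero_or_pos k with h | h
      · exact h
      · exact absurd (Nat.le_of_dvd h hnk) (by omega)
    rw [hk0] at hnat
    simp at hnat
    rcases hnat with h | h <;> omega
  rw [Finset.card_union_of_disjoint hdisj]
  have inj1 : Set.InjOn (fun k : ℕ => (k:ℝ) * π / n) ↑(Finset.range n) := by
    intro a _ b _ h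
    dsimp only at h
    rw [mul_div_assoc, mul_div_assoc] at h
    exact_mod_cast mul_right_cancel₀ (div_ne_zero hπ' hn') h
  have inj2 : Set.InjOn (fun j : ℕ => (j:ℝ) * π / m) ↑(Finset.Icc 1 m) := by
    intro a _ b _ h
    dsimp only at h
    rw [mul_div_assoc, mul_div_assoc] at h
    exact_mod_cast mul_right_cancel₀ (div_ne_zero hπ' hm') h
  rw [Finset.card_image_of_injOn inj1, Finset.card_image_of_injOn inj2,
    Finset.card_range, Nat.card_Icc]
  omega

theorem lissajous_boundary_points_card (n p : ℕ) (hn : 0 < n) (hp : 0 < p)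
    (hcop : Nat.Coprime n (n + p))
    (γ : ℝ → ℝ × ℝ)
    (hγ : ∀ t, γ t = (Real.cos (n * t), Real.cos ((n + p) * t))) :
    Set.ncard {A : ℝ × ℝ | A ∈ γ '' Set.Icc 0 π ∧ (|A.1| = 1 ∨ |A.2| = 1)} =
      2 * n + p := by
  have h : {A : ℝ × ℝ | A ∈ γ '' Set.Icc 0 π ∧ (|A.1| = 1 ∨ |A.2| = 1)} =
      {A : ℝ × ℝ | (∃ t ∈ Set.Icc (0:ℝ) π,
        (Real.cos ((n:ℝ) * t), Real.cos (((n+p : ℕ):ℝ) * t)) = A) ∧ (|A.1| = 1 ∨ |A.2| = 1)} := by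
    ext A
    simp only [Set.mem_setOf_eq, Set.mem_image, hγ]
    push_cast
    rfl
  rw [h, count n (n+p) hn (by omega) hcop]
  omega
end

section
/- Let P(x,y) be a bivariate polynomial that is orthogonal to T_{k(n+p)}(x)·T_{kn}(y) for all k ∈ ℕ with respect to the product Chebyshev weight on [−1,1]². Then (1/π²)∫∫_{[−1,1]²} P(x,y)(1−x²)^{−1/2}(1−y²)^{−1/2} dx dy = (1/π)∫₀^π P(cos(nt), cos((n+p)t)) dt. -/
open Real Finset MeasureTheory intervalIntegral

set_option maxHeartbeats 1000000

noncomputable section LissajousAux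


lemma cos_image_Ioo : Real.cos '' Set.Ioo 0 π = Set.Ioo (-1) 1 := by
  apply Set.Subset.antisymm
  · rintro y ⟨x, hx, rfl⟩
    constructor
    · have := Real.strictAntiOn_cos (Set.mem_Icc.2 ⟨hx.1.le, hx.2.le⟩)
        (Set.mem_Icc.2 ⟨Real.pi_pos.le, le_rfl⟩) hx.2
      simpa [Real.cos_pi] using this
    · have := Real.strictAntiOn_cos (Set.mem_Icc.2 ⟨le_rfl, Real.pi_pos.le⟩)
        (Set.mem_Icc.2 ⟨hx.1.le, hx.2.le⟩) hx.1
      simpa [Real.cos_zero] using this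
  · rintro y hy
    obtain ⟨x, hx, rfl⟩ := Real.surjOn_cos (Set.mem_Icc.2 ⟨hy.1.le, hy.2.le⟩)
    refine ⟨x, ⟨?_, ?_⟩, rfl⟩
    · rcases eq_or_lt_of_le hx.1 with h | h
      · exfalso; rw [← h, Real.cos_zero] at hy; exact lt_irrefl _ hy.2
      · exact h
    · rcases eq_or_lt_of_le hx.2 with h | h
      · exfalso; rw [h, Real.cos_pi] at hy; exact lt_irrefl _ hy.1
      · exact h

lemma sub_cos (g : ℝ → ℝ) :
    ∫ x in (-1 : ℝ)..1, g x / Real.sqrt (1 - x ^ 2) = ∫ t in (0:ℝ)..π, g (Real.cos t) := by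
  have h1 : ∫ x in (-1:ℝ)..1, g x / Real.sqrt (1 - x^2)
      = ∫ x in Set.Ioo (-1:ℝ) 1, g x / Real.sqrt (1 - x^2) := by
    rw [intervalIntegral.integral_of_le (by norm_num), integral_Ioc_eq_integral_Ioo]
  have h2 : ∫ t in (0:ℝ)..π, g (Real.cos t) = ∫ t in Set.Ioo (0:ℝ) π, g (Real.cos t) := by
    rw [intervalIntegral.integral_of_le pi_pos.le, integral_Ioc_eq_integral_Ioo]
  rw [h1, h2, ← cos_image_Ioo]
  rw [MeasureTheory.integral_image_eq_integral_abs_deriv_smul measurableSet_Ioo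
      (fun x _ => (Real.hasDerivAt_cos x).hasDerivWithinAt)
      (Real.injOn_cos.mono (Set.Ioo_subset_Icc_self))]
  apply MeasureTheory.setIntegral_congr_fun measurableSet_Ioo
  intro x hx
  have hs : 0 < Real.sin x := Real.sin_pos_of_pos_of_lt_pi hx.1 hx.2
  have hsq : Real.sqrt (1 - Real.cos x ^ 2) = Real.sin x := by
    rw [show (1 : ℝ) - Real.cos x ^ 2 = Real.sin x ^ 2 by
      have := Real.sin_sq_add_cos_sq x; linarith]
    exact Real.sqrt_sq hs.le
  simp only [hsq, abs_neg, abs_of_pos hs, smul_eq_mul]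
  field_simp

lemma sub_cos_integrable (g : ℝ → ℝ) (hg : Continuous g) :
    IntervalIntegrable (fun x => g x / Real.sqrt (1 - x ^ 2)) volume (-1) 1 := by
  rw [intervalIntegrable_iff_integrableOn_Ioo_of_le (by norm_num)]
  rw [← cos_image_Ioo]
  rw [MeasureTheory.integrableOn_image_iff_integrableOn_abs_deriv_smul measurableSet_Ioo
      (fun x _ => (Real.hasDerivAt_cos x).hasDerivWithinAt)
      (Real.injOn_cos.mono (Set.Ioo_subset_Icc_self))]
  apply MeasureTheory.IntegrableOn.congr_fun (f := fun x => g (Real.cos x))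
  · exact ((hg.comp Real.continuous_cos).integrableOn_Icc).mono_set Set.Ioo_subset_Icc_self
  · intro x hx
    have hs : 0 < Real.sin x := Real.sin_pos_of_pos_of_lt_pi hx.1 hx.2
    have hsq : Real.sqrt (1 - Real.cos x ^ 2) = Real.sin x := by
      rw [show (1 : ℝ) - Real.cos x ^ 2 = Real.sin x ^ 2 by
        have := Real.sin_sq_add_cos_sq x; linarith]
      exact Real.sqrt_sq hs.le
    simp only [hsq, abs_neg, abs_of_pos hs, smul_eq_mul]
    field_simp
  · exact measurableSet_Ioo


noncomputable def W (u v : ℤ) : ℝ :=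
  ((if u = -v then (1:ℝ) else 0) + (if u = v then 1 else 0)) / 2

lemma integral_cos_int (m : ℤ) :
    ∫ t in (0:ℝ)..π, Real.cos (m * t) = if m = 0 then π else 0 := by
  rcases eq_or_ne m 0 with h | h
  · simp [h, Real.pi_pos.le]
  · have hm : (m : ℝ) ≠ 0 := Int.cast_ne_zero.2 h
    rw [if_neg h]
    have := intervalIntegral.integral_comp_mul_left (a := (0:ℝ)) (b := π)
      (fun x => Real.cos x) hm
    simp only [integral_cos] at this
    rw [this]
    simp [Real.sin_int_mul_pi]

lemma integral_cos_mul_cos_int (u v : ℤ) :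
    (1/π) * ∫ t in (0:ℝ)..π, Real.cos (u * t) * Real.cos (v * t) = W u v := by
  have hint : ∀ m : ℤ, IntervalIntegrable (fun t => Real.cos (m * t)) volume 0 π :=
    fun m => (Real.continuous_cos.comp (continuous_const.mul continuous_id)).intervalIntegrable _ _
  have key : ∀ t : ℝ, Real.cos (u * t) * Real.cos (v * t)
      = (Real.cos (((u + v : ℤ) : ℝ) * t) + Real.cos (((u - v : ℤ) : ℝ) * t)) / 2 := by
    intro t
    push_cast
    rw [add_mul, sub_mul, Real.cos_add, Real.cos_sub]
    ring
  rw [intervalIntegral.integral_congr (fun t _ => key t)]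
  have : ∫ t in (0:ℝ)..π, (Real.cos (((u+v:ℤ):ℝ) * t) + Real.cos (((u-v:ℤ):ℝ) * t)) / 2
      = ((∫ t in (0:ℝ)..π, Real.cos (((u+v:ℤ):ℝ) * t)) + ∫ t in (0:ℝ)..π, Real.cos (((u-v:ℤ):ℝ) * t)) / 2 := by
    rw [intervalIntegral.integral_div, intervalIntegral.integral_add (hint _) (hint _)]
  rw [this, integral_cos_int, integral_cos_int, W]
  have hpi : π ≠ 0 := Real.pi_ne_zero
  have h1 : (u + v = 0) ↔ (u = -v) := by omega
  have h2 : (u - v = 0) ↔ (u = v) := by omega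
  rw [show (if u+v=0 then π else 0) = π * (if u = -v then (1:ℝ) else 0) by
      rw [if_congr h1 rfl rfl, mul_ite, mul_one, mul_zero],
    show (if u-v=0 then π else 0) = π * (if u = v then (1:ℝ) else 0) by
      rw [if_congr h2 rfl rfl, mul_ite, mul_one, mul_zero]]
  field_simp


lemma cos_pow_expand (a : ℕ) (t : ℝ) :
    Real.cos t ^ a = (1/2^a) * ∑ j ∈ Finset.range (a+1),
      (a.choose j : ℝ) * Real.cos (((2*(j:ℤ) - a : ℤ) : ℝ) * t) := by
  have main : (Complex.cos (t:ℂ)) ^ a = (1/2^a) * ∑ j ∈ Finset.range (a+1),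
      (a.choose j : ℂ) * Complex.cos (((2*(j:ℤ) - a : ℤ) : ℂ) * t) := by
    set e : ℤ → ℂ := fun m => Complex.exp ((m : ℂ) * ((t:ℂ) * Complex.I)) with he_def
    have he_add : ∀ m₁ m₂ : ℤ, e m₁ * e m₂ = e (m₁ + m₂) := by
      intro m₁ m₂
      simp only [he_def, ← Complex.exp_add]
      congr 1
      push_cast
      ring
    have he_pow : ∀ (m : ℤ) (k : ℕ), (e m) ^ k = e (k * m) := by
      intro m k
      simp only [he_def, ← Complex.exp_nat_mul]
      congr 1
      push_cast
      ring
    have hcos : ∀ m : ℤ, Complex.cos ((m:ℂ) * t) = (e m + e (-m)) / 2 := by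
      intro m
      rw [Complex.cos]
      congr 2 <;> (simp only [he_def]; congr 1; push_cast; ring)
    have h1 : (Complex.cos (t:ℂ)) = (e 1 + e (-1)) / 2 := by
      have := hcos 1; simpa using this
    rw [h1, div_pow, Commute.add_pow (Commute.all _ _)]
    have hterm : ∀ j ∈ Finset.range (a+1),
        e 1 ^ j * e (-1) ^ (a - j) * (a.choose j : ℂ) = (a.choose j : ℂ) * e (2*j - a) := by
      intro j hj
      have hj' : j ≤ a := Nat.lt_succ_iff.1 (Finset.mem_range.1 hj)
      rw [he_pow, he_pow, he_add]
      rw [mul_comm]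
      congr 2
      push_cast [hj']
      ring
    rw [Finset.sum_congr rfl hterm]
    have hrefl : ∑ j ∈ Finset.range (a+1), (a.choose j : ℂ) * e (2*j - a)
        = ∑ j ∈ Finset.range (a+1), (a.choose j : ℂ) * e (a - 2*j) := by
      rw [← Finset.sum_range_reflect]
      apply Finset.sum_congr rfl
      intro j hj
      have hj' : j ≤ a := Nat.lt_succ_iff.1 (Finset.mem_range.1 hj)
      have h1 : a + 1 - 1 - j = a - j := by omega
      rw [h1, Nat.choose_symm hj',
        show ((a - j : ℕ) : ℤ) = (a : ℤ) - j from by omega,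
        show 2 * ((a:ℤ) - j) - a = (a:ℤ) - 2*j from by ring]
    have hsym : ∑ j ∈ Finset.range (a+1), (a.choose j : ℂ) * e (2*j - a)
        = ∑ j ∈ Finset.range (a+1), (a.choose j : ℂ) * ((e (2*j-a) + e (-(2*j-a)))/2) := by
      calc ∑ j ∈ Finset.range (a+1), (a.choose j : ℂ) * e (2*j - a)
          = (∑ j ∈ Finset.range (a+1), (a.choose j : ℂ) * e (2*j - a)
            + ∑ j ∈ Finset.range (a+1), (a.choose j : ℂ) * e (a - 2*j)) / 2 := by
            rw [← hrefl]; ring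
        _ = _ := by
            rw [← Finset.sum_add_distrib, Finset.sum_div]
            apply Finset.sum_congr rfl
            intro j hj
            rw [show (a:ℤ) - 2*j = -(2*(j:ℤ) - a) from by ring]
            ring
    rw [hsym]
    rw [div_eq_mul_inv, mul_comm, ← one_div]
    congr 1
    apply Finset.sum_congr rfl
    intro j hj
    rw [hcos (2*j - a)]
  have h2 : ((Real.cos t ^ a : ℝ) : ℂ) = (((1/2^a) * ∑ j ∈ Finset.range (a+1),
      (a.choose j : ℝ) * Real.cos (((2*(j:ℤ) - a : ℤ) : ℝ) * t) : ℝ) : ℂ) := by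
    push_cast
    push_cast at main
    convert main using 2
  exact Complex.ofReal_inj.mp h2



noncomputable def Sq (a : ℕ) (v : ℤ) : ℝ :=
  ∑ j ∈ Finset.range (a+1), (1/2^a * (a.choose j : ℝ)) * W (2*j - a) v

lemma cos_arg_mul (m c : ℤ) (t : ℝ) :
    Real.cos (((m:ℤ):ℝ) * (((c:ℤ):ℝ) * t)) = Real.cos (((m*c : ℤ):ℝ) * t) := by
  push_cast; ring_nf

lemma cos_int_cont (m : ℤ) : Continuous (fun t : ℝ => Real.cos ((m:ℝ) * t)) :=
  Real.continuous_cos.comp (continuous_const.mul continuous_id)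

lemma integral_pow_cos_mul_cos (a : ℕ) (c v : ℤ) :
    (1/π) * ∫ t in (0:ℝ)..π, Real.cos ((c:ℝ) * t) ^ a * Real.cos ((v:ℝ) * t)
      = ∑ j ∈ Finset.range (a+1), (1/2^a * (a.choose j : ℝ)) * W ((2*j - a) * c) v := by
  have h : ∀ t : ℝ, Real.cos ((c:ℝ)*t) ^ a * Real.cos ((v:ℝ)*t)
      = ∑ j ∈ Finset.range (a+1), (1/2^a * (a.choose j : ℝ))
          * (Real.cos ((((2*(j:ℤ) - a) * c : ℤ) : ℝ) * t) * Real.cos ((v:ℝ)*t)) := by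
    intro t
    rw [cos_pow_expand a ((c:ℝ)*t)]
    simp only [cos_arg_mul]
    rw [mul_assoc, Finset.sum_mul, Finset.mul_sum]
    exact Finset.sum_congr rfl fun j _ => by ring
  rw [intervalIntegral.integral_congr (fun t _ => h t)]
  rw [intervalIntegral.integral_finset_sum (f := fun j t => (1/2^a * (a.choose j : ℝ))
        * (Real.cos ((((2*(j:ℤ) - a) * c : ℤ) : ℝ) * t) * Real.cos ((v:ℝ)*t))) (fun j _ => ((continuous_const.mul
    ((cos_int_cont _).mul (cos_int_cont _))).intervalIntegrable _ _))]
  rw [Finset.mul_sum]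
  refine Finset.sum_congr rfl fun j _ => ?_
  rw [intervalIntegral.integral_const_mul, ← integral_cos_mul_cos_int ((2*j - a) * c) v]
  ring

lemma Sq_eq (a : ℕ) (v : ℤ) :
    (1/π) * ∫ t in (0:ℝ)..π, Real.cos t ^ a * Real.cos ((v:ℝ) * t) = Sq a v := by
  have h := integral_pow_cos_mul_cos a 1 v
  simp only [Int.cast_one, one_mul, mul_one] at h
  rw [h, Sq]

lemma integral_pow_cos_mul_pow_cos (a b : ℕ) (c d : ℤ) :
    (1/π) * ∫ t in (0:ℝ)..π, Real.cos ((c:ℝ) * t) ^ a * Real.cos ((d:ℝ) * t) ^ b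
      = ∑ j ∈ Finset.range (a+1), ∑ k ∈ Finset.range (b+1),
          (1/2^a * (a.choose j : ℝ)) * (1/2^b * (b.choose k : ℝ))
            * W ((2*j - a) * c) ((2*k - b) * d) := by
  have h : ∀ t : ℝ, Real.cos ((c:ℝ)*t) ^ a * Real.cos ((d:ℝ)*t) ^ b
      = ∑ j ∈ Finset.range (a+1), ∑ k ∈ Finset.range (b+1),
          ((1/2^a * (a.choose j : ℝ)) * (1/2^b * (b.choose k : ℝ)))
            * (Real.cos ((((2*(j:ℤ) - a) * c : ℤ) : ℝ) * t)
               * Real.cos ((((2*(k:ℤ) - b) * d : ℤ) : ℝ) * t)) := by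
    intro t
    rw [cos_pow_expand a ((c:ℝ)*t), cos_pow_expand b ((d:ℝ)*t)]
    simp only [cos_arg_mul]
    rw [mul_mul_mul_comm, Finset.sum_mul_sum, Finset.mul_sum]
    refine Finset.sum_congr rfl fun j _ => ?_
    rw [Finset.mul_sum]
    exact Finset.sum_congr rfl fun k _ => by ring
  rw [intervalIntegral.integral_congr (fun t _ => h t)]
  rw [intervalIntegral.integral_finset_sum (f := fun j t => ∑ k ∈ Finset.range (b+1),
          ((1/2^a * (a.choose j : ℝ)) * (1/2^b * (b.choose k : ℝ)))
            * (Real.cos ((((2*(j:ℤ) - a) * c : ℤ) : ℝ) * t)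
               * Real.cos ((((2*(k:ℤ) - b) * d : ℤ) : ℝ) * t))) (fun j _ => (continuous_finset_sum _
    (fun k _ => (continuous_const.mul
      ((cos_int_cont _).mul (cos_int_cont _))))).intervalIntegrable _ _)]
  rw [Finset.mul_sum]
  refine Finset.sum_congr rfl fun j _ => ?_
  rw [intervalIntegral.integral_finset_sum (f := fun k t =>
          ((1/2^a * (a.choose j : ℝ)) * (1/2^b * (b.choose k : ℝ)))
            * (Real.cos ((((2*(j:ℤ) - a) * c : ℤ) : ℝ) * t)
               * Real.cos ((((2*(k:ℤ) - b) * d : ℤ) : ℝ) * t))) (fun k _ => ((continuous_const.mul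
    ((cos_int_cont _).mul (cos_int_cont _))).intervalIntegrable _ _))]
  rw [Finset.mul_sum]
  refine Finset.sum_congr rfl fun k _ => ?_
  rw [intervalIntegral.integral_const_mul,
    ← integral_cos_mul_cos_int ((2*j - a) * c) ((2*k - b) * d)]
  ring



lemma W_zero_right (u : ℤ) : W u 0 = if u = 0 then 1 else 0 := by
  by_cases h : u = 0 <;> simp [W, h]

lemma W_neg_left (u v : ℤ) : W (-u) v = W u v := by
  unfold W
  rw [add_comm]
  simp only [show ((-u = -v) ↔ (u = v)) from by omega,
    show ((-u = v) ↔ (u = -v)) from by omega]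

lemma W_mul_left {c : ℤ} (hc : c ≠ 0) (x y : ℤ) : W (c*x) (c*y) = W x y := by
  unfold W
  simp only [show ((c*x = -(c*y)) ↔ (x = -y)) from by
      rw [← mul_neg, mul_right_inj' hc],
    show ((c*x = c*y) ↔ (x = y)) from mul_right_inj' hc]

lemma W_of_ne {u v : ℤ} (h1 : u ≠ -v) (h2 : u ≠ v) : W u v = 0 := by
  simp [W, h1, h2]

lemma W_self_natAbs {u : ℤ} (hu : u ≠ 0) : W u u.natAbs = 1/2 := by
  unfold W
  rcases Int.natAbs_eq u with h | h
  · rw [if_neg (by omega), if_pos (by omega)]; norm_num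
  · rw [if_pos (by omega), if_neg (by omega)]; norm_num

lemma W_split (n p : ℕ) (hn : 0 < n) (hcop : Nat.Coprime n (n+p))
    (K : ℕ) (u v : ℤ) (hu : u.natAbs ≤ K) :
    W (u * n) (v * (n+p)) = W u 0 * W 0 v
      + 2 * ∑ m ∈ Finset.range K, W u ((m+1) * (n+p)) * W ((m+1) * n) v := by
  have hA_def : ((n:ℤ) + (p:ℤ)) = ((n+p:ℕ):ℤ) := by push_cast; ring
  rw [hA_def]
  set A : ℤ := ((n+p : ℕ) : ℤ)
  have hA : (0:ℤ) < A := by positivity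
  have hcop' : IsCoprime A (n : ℤ) := by
    rw [Nat.isCoprime_iff_coprime]
    exact Nat.coprime_comm.mp hcop
  by_cases hdvd : A ∣ u
  · obtain ⟨m₀, rfl⟩ := hdvd
    have hL : W (A * m₀ * n) (v * A) = W (m₀ * n) v := by
      rw [show A * m₀ * (n:ℤ) = A * (m₀ * n) by ring, show v * A = A * v by ring,
        W_mul_left hA.ne']
    rw [hL]
    have hW0 : W (A * m₀) 0 = if m₀ = 0 then (1:ℝ) else 0 := by
      rw [W_zero_right]
      exact if_congr (by simp [mul_eq_zero, hA.ne']) rfl rfl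
    have hterm : ∀ m : ℕ, W (A * m₀) (((m:ℤ)+1) * A) = W m₀ ((m:ℤ)+1) := by
      intro m
      rw [show ((m:ℤ)+1) * A = A * ((m:ℤ)+1) by ring, W_mul_left hA.ne']
    simp only [hterm, hW0]
    by_cases hm0 : m₀ = 0
    · subst hm0
      have hz : ∀ m ∈ Finset.range K, W 0 ((m:ℤ)+1) * W (((m:ℤ)+1) * n) v = 0 := by
        intro m _
        rw [W_of_ne (by omega) (by omega)]
        ring
      rw [Finset.sum_congr rfl hz]
      simp
    · set m₁ : ℕ := m₀.natAbs - 1 with hm₁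
      have hm₀abs : 1 ≤ m₀.natAbs := by omega
      have habsle : m₀.natAbs ≤ K := by
        have h1 : m₀.natAbs ≤ (A * m₀).natAbs := by
          rw [Int.natAbs_mul]
          exact Nat.le_mul_of_pos_left _ (Int.natAbs_pos.mpr hA.ne')
        omega
      have hmem : m₁ ∈ Finset.range K := Finset.mem_range.2 (by omega)
      have hsum : ∑ m ∈ Finset.range K, W m₀ ((m:ℤ)+1) * W (((m:ℤ)+1) * n) v
          = W m₀ ((m₁:ℤ)+1) * W (((m₁:ℤ)+1) * n) v := by
        apply Finset.sum_eq_single_of_mem m₁ hmem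
        intro b _ hb
        rw [W_of_ne (by omega) (by omega)]
        ring
      rw [hsum]
      have h1 : ((m₁:ℤ)+1) = (m₀.natAbs : ℤ) := by omega
      rw [h1, W_self_natAbs hm0, if_neg hm0]
      have h2 : W ((m₀.natAbs : ℤ) * n) v = W (m₀ * n) v := by
        rcases Int.natAbs_eq m₀ with h | h
        · rw [← h]
        · have h3 : (m₀.natAbs : ℤ) = -m₀ := by omega
          rw [show ((m₀.natAbs : ℤ)) * n = -(m₀ * n) by rw [h3]; ring, W_neg_left]
      rw [h2]
      ring
  · have hLdvd : ∀ w : ℤ, u * n = w * A → A ∣ u := by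
      intro w h
      exact hcop'.dvd_of_dvd_mul_right ⟨w, by rw [h, mul_comm]⟩
    have c1 : u * (n:ℤ) ≠ -(v * A) := by
      intro h; exact hdvd (hLdvd (-v) (by linarith))
    have c2 : u * (n:ℤ) ≠ v * A := fun h => hdvd (hLdvd v h)
    rw [W_of_ne c1 c2, W_zero_right, if_neg (fun h => hdvd (by simp [h]))]
    have hz : ∀ m ∈ Finset.range K, W u (((m:ℤ)+1) * A) * W (((m:ℤ)+1) * n) v = 0 := by
      intro m _
      have hne : u ≠ ((m:ℤ)+1) * A := fun h => hdvd (h ▸ ⟨(m:ℤ)+1, by ring⟩)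
      have hne' : u ≠ -(((m:ℤ)+1) * A) := fun h => hdvd (h ▸ ⟨-((m:ℤ)+1), by ring⟩)
      rw [W_of_ne hne' hne]
      ring
    rw [Finset.sum_congr rfl hz]
    simp




lemma W_comm (u v : ℤ) : W u v = W v u := by
  unfold W
  simp only [show ((u = -v) ↔ (v = -u)) from by omega,
    show ((u = v) ↔ (v = u)) from by omega]

lemma Sq_vanish (a : ℕ) (v : ℤ) (h : (a:ℤ) < |v|) : Sq a v = 0 := by
  have h' : (a:ℤ) < v ∨ v < -(a:ℤ) := by rcases abs_cases v with ⟨h1,h2⟩|⟨h1,h2⟩ <;> omega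
  apply Finset.sum_eq_zero
  intro j hj
  have hj' : j ≤ a := Nat.lt_succ_iff.1 (Finset.mem_range.1 hj)
  have h1 : 2*(j:ℤ) - a ≠ -v := by omega
  have h2 : 2*(j:ℤ) - a ≠ v := by omega
  simp [W, h1, h2]

lemma R_eq (n p : ℕ) (hn : 0 < n) (hcop : Nat.Coprime n (n+p)) (K a b : ℕ) (hK : a ≤ K) :
    (1/π) * ∫ t in (0:ℝ)..π, Real.cos ((n:ℝ) * t) ^ a * Real.cos (((n:ℝ)+(p:ℝ)) * t) ^ b
      = Sq a 0 * Sq b 0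
        + 2 * ∑ m ∈ Finset.range K, Sq a ((m+1) * (n+p)) * Sq b ((m+1) * n) := by
  have hcast : ((n:ℝ) + (p:ℝ)) = ((((n:ℤ)+(p:ℤ)) : ℤ) : ℝ) := by push_cast; ring
  have hcast2 : ((n:ℝ)) = (((n:ℕ):ℤ) : ℝ) := by push_cast; ring
  rw [hcast, hcast2, integral_pow_cos_mul_pow_cos a b (n:ℤ) ((n:ℤ)+(p:ℤ))]
  have hsplit : ∀ j ∈ Finset.range (a+1), ∀ k ∈ Finset.range (b+1),
      W ((2*(j:ℤ) - a) * (n:ℤ)) ((2*(k:ℤ) - b) * ((n:ℤ)+(p:ℤ)))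
        = W (2*(j:ℤ)-a) 0 * W 0 (2*(k:ℤ)-b)
          + 2 * ∑ m ∈ Finset.range K,
              W (2*(j:ℤ)-a) (((m:ℤ)+1) * ((n:ℤ)+(p:ℤ)))
                * W ((((m:ℤ)+1)) * (n:ℤ)) (2*(k:ℤ)-b) := by
    intro j hj k _
    have hj' : j ≤ a := Nat.lt_succ_iff.1 (Finset.mem_range.1 hj)
    have habs : (2*(j:ℤ) - a).natAbs ≤ K := by omega
    exact W_split n p hn hcop K (2*(j:ℤ)-a) (2*(k:ℤ)-b) habs
  calc ∑ j ∈ Finset.range (a+1), ∑ k ∈ Finset.range (b+1),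
        (1/2^a * (a.choose j:ℝ)) * (1/2^b * (b.choose k:ℝ))
          * W ((2*(j:ℤ) - a) * (n:ℤ)) ((2*(k:ℤ) - b) * ((n:ℤ)+(p:ℤ)))
      = ∑ j ∈ Finset.range (a+1), ∑ k ∈ Finset.range (b+1),
          (((1/2^a * (a.choose j:ℝ)) * W (2*(j:ℤ)-a) 0)
            * ((1/2^b * (b.choose k:ℝ)) * W (2*(k:ℤ)-b) 0)
          + ∑ m ∈ Finset.range K,
              2 * (((1/2^a * (a.choose j:ℝ)) * W (2*(j:ℤ)-a) (((m:ℤ)+1) * ((n:ℤ)+(p:ℤ))))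
                * ((1/2^b * (b.choose k:ℝ)) * W (2*(k:ℤ)-b) (((m:ℤ)+1) * (n:ℤ))))) := by
        refine Finset.sum_congr rfl fun j hj => Finset.sum_congr rfl fun k hk => ?_
        rw [hsplit j hj k hk, mul_add]
        congr 1
        · rw [W_comm (2*(k:ℤ)-b) 0]; ring
        · rw [Finset.mul_sum, Finset.mul_sum]
          apply Finset.sum_congr rfl
          intro m _
          rw [W_comm (2*(k:ℤ)-b) (((m:ℤ)+1) * (n:ℤ))]
          ring
    _ = Sq a 0 * Sq b 0
        + 2 * ∑ m ∈ Finset.range K, Sq a ((m+1) * (n+p)) * Sq b ((m+1) * n) := by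
        rw [Finset.sum_congr rfl (fun j _ => Finset.sum_add_distrib),
          Finset.sum_add_distrib]
        congr 1
        · rw [Sq, Sq, Finset.sum_mul_sum]
        · rw [Finset.sum_congr rfl (fun j _ => Finset.sum_comm), Finset.sum_comm,
            Finset.mul_sum]
          refine Finset.sum_congr rfl fun m _ => ?_
          rw [Sq, Sq, Finset.sum_mul_sum, Finset.mul_sum]
          exact Finset.sum_congr rfl fun j _ => by rw [Finset.mul_sum]


lemma double_eq {ι : Type*} (S : Finset ι) (c : ι → ℝ) (a b : ι → ℕ) (P : ℝ → ℝ → ℝ)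
    (hP : ∀ x y, P x y = ∑ m ∈ S, c m * x ^ (a m) * y ^ (b m))
    (g h : ℝ → ℝ) (hg : Continuous g) (hh : Continuous h) :
    (1/π^2) * ∫ x in (-1:ℝ)..1, ∫ y in (-1:ℝ)..1,
        P x y * g x * h y / (Real.sqrt (1-x^2) * Real.sqrt (1-y^2))
      = ∑ m ∈ S, c m * (((1/π) * ∫ s in (0:ℝ)..π, Real.cos s ^ (a m) * g (Real.cos s))
          * ((1/π) * ∫ t in (0:ℝ)..π, Real.cos t ^ (b m) * h (Real.cos t))) := by
  have inner : ∀ x : ℝ, (∫ y in (-1:ℝ)..1,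
        P x y * g x * h y / (Real.sqrt (1-x^2) * Real.sqrt (1-y^2)))
      = ∑ m ∈ S, (c m * ∫ t in (0:ℝ)..π, Real.cos t ^ (b m) * h (Real.cos t))
          * ((x ^ (a m) * g x) / Real.sqrt (1-x^2)) := by
    intro x
    have hcong : ∀ y : ℝ, P x y * g x * h y / (Real.sqrt (1-x^2) * Real.sqrt (1-y^2))
        = ∑ m ∈ S, ((c m * x ^ (a m) * g x) / Real.sqrt (1-x^2))
            * ((y ^ (b m) * h y) / Real.sqrt (1-y^2)) := by
      intro y
      rw [hP x y, Finset.sum_mul, Finset.sum_mul, Finset.sum_div]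
      apply Finset.sum_congr rfl
      intro m _
      rw [div_mul_div_comm]
      ring_nf
    rw [intervalIntegral.integral_congr (fun y _ => hcong y)]
    rw [intervalIntegral.integral_finset_sum (fun m _ =>
      (sub_cos_integrable (fun y => y ^ (b m) * h y)
        ((continuous_pow _).mul hh)).const_mul _)]
    apply Finset.sum_congr rfl
    intro m _
    rw [intervalIntegral.integral_const_mul, sub_cos (fun y => y ^ (b m) * h y)]
    ring
  rw [intervalIntegral.integral_congr (fun x _ => inner x)]
  rw [intervalIntegral.integral_finset_sum (fun m _ =>
    (sub_cos_integrable (fun x => x ^ (a m) * g x)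
      ((continuous_pow _).mul hg)).const_mul _)]
  rw [Finset.mul_sum]
  apply Finset.sum_congr rfl
  intro m _
  rw [intervalIntegral.integral_const_mul, sub_cos (fun x => x ^ (a m) * g x)]
  rw [show (1:ℝ)/π^2 = (1/π) * (1/π) by ring]
  ring

end LissajousAux
theorem integral_2D_to_1D_on_lissajous (n p : ℕ) (hn : 0 < n) (hp : 0 < p)
    (hcop : Nat.Coprime n (n + p)) (P : ℝ → ℝ → ℝ)
    (hpoly : ∃ Q : MvPolynomial (Fin 2) ℝ, ∀ x y, P x y = MvPolynomial.eval ![x, y] Q)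
    (horth : ∀ k : ℕ, 1 ≤ k →
      (1 / π ^ 2) * ∫ x in (-1 : ℝ)..1, ∫ y in (-1 : ℝ)..1,
        P x y * (Polynomial.Chebyshev.T ℝ (k * (n + p))).eval x *
          (Polynomial.Chebyshev.T ℝ (k * n)).eval y /
            (Real.sqrt (1 - x ^ 2) * Real.sqrt (1 - y ^ 2)) = 0) :
    (1 / π ^ 2) * ∫ x in (-1 : ℝ)..1, ∫ y in (-1 : ℝ)..1,
        P x y / (Real.sqrt (1 - x ^ 2) * Real.sqrt (1 - y ^ 2)) =
      (1 / π) * ∫ t in (0 : ℝ)..π, P (Real.cos (n * t)) (Real.cos ((n + p) * t)) := by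
  classical
  obtain ⟨Q, hQ⟩ := hpoly
  set S := Q.support with hS
  set c : (Fin 2 →₀ ℕ) → ℝ := fun m => Q.coeff m with hc
  have hP : ∀ x y : ℝ, P x y = ∑ m ∈ S, c m * x ^ (m 0) * y ^ (m 1) := by
    intro x y
    rw [hQ x y, MvPolynomial.eval_eq']
    refine Finset.sum_congr rfl fun m _ => ?_
    rw [Fin.prod_univ_two]
    simp only [Matrix.cons_val_zero, Matrix.cons_val_one, Matrix.head_cons]
    ring
  have hSq1 : ∀ a : ℕ, (1/π) * ∫ s in (0:ℝ)..π, Real.cos s ^ a * (1:ℝ) = Sq a 0 := by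
    intro a
    rw [← Sq_eq a 0]
    congr 1
    apply intervalIntegral.integral_congr
    intro s _
    norm_num
  have hSqT : ∀ (a : ℕ) (N : ℤ),
      (1/π) * ∫ s in (0:ℝ)..π,
          Real.cos s ^ a * (Polynomial.Chebyshev.T ℝ N).eval (Real.cos s) = Sq a N := by
    intro a N
    rw [← Sq_eq a N]
    congr 1
    apply intervalIntegral.integral_congr
    intro s _
    simp only [Polynomial.Chebyshev.T_real_cos]
  have hLHS : (1 / π ^ 2) * ∫ x in (-1 : ℝ)..1, ∫ y in (-1 : ℝ)..1,
      P x y / (Real.sqrt (1 - x ^ 2) * Real.sqrt (1 - y ^ 2))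
      = ∑ m ∈ S, c m * (Sq (m 0) 0 * Sq (m 1) 0) := by
    have h0 : (∫ x in (-1:ℝ)..1, ∫ y in (-1:ℝ)..1,
          P x y / (Real.sqrt (1-x^2) * Real.sqrt (1-y^2)))
        = ∫ x in (-1:ℝ)..1, ∫ y in (-1:ℝ)..1,
          P x y * (fun _ : ℝ => (1:ℝ)) x * (fun _ : ℝ => (1:ℝ)) y
            / (Real.sqrt (1-x^2) * Real.sqrt (1-y^2)) := by
      apply intervalIntegral.integral_congr
      intro x _
      apply intervalIntegral.integral_congr
      intro y _
      norm_num
    rw [h0, double_eq S c (fun m => m 0) (fun m => m 1) P hP _ _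
      continuous_const continuous_const]
    exact Finset.sum_congr rfl fun m _ => by rw [hSq1, hSq1]
  have hORT : ∀ k : ℕ, 1 ≤ k →
      ∑ m ∈ S, c m * (Sq (m 0) ((k:ℤ) * ((n:ℤ)+(p:ℤ))) * Sq (m 1) ((k:ℤ) * (n:ℤ))) = 0 := by
    intro k hk
    have h := horth k hk
    have h2 := double_eq S c (fun m => m 0) (fun m => m 1) P hP
      (fun x => (Polynomial.Chebyshev.T ℝ ((k:ℤ) * ((n:ℤ)+(p:ℤ)))).eval x)
      (fun y => (Polynomial.Chebyshev.T ℝ ((k:ℤ) * (n:ℤ))).eval y)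
      (Polynomial.continuous _) (Polynomial.continuous _)
    rw [h2] at h
    simp only [hSqT] at h
    exact h
  set D := S.sup (fun m => m 0) with hD
  have hRHS : (1/π) * (∫ t in (0:ℝ)..π, P (Real.cos (n * t)) (Real.cos ((n + p) * t)))
      = ∑ m ∈ S, c m * (Sq (m 0) 0 * Sq (m 1) 0
          + 2 * ∑ j ∈ Finset.range D,
              Sq (m 0) (((j:ℤ)+1) * ((n:ℤ)+(p:ℤ))) * Sq (m 1) (((j:ℤ)+1) * (n:ℤ))) := by
    have h0 : ∀ t : ℝ, P (Real.cos ((n:ℝ) * t)) (Real.cos (((n:ℝ)+(p:ℝ)) * t))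
        = ∑ m ∈ S, c m * (Real.cos ((n:ℝ)*t) ^ (m 0) * Real.cos (((n:ℝ)+(p:ℝ))*t) ^ (m 1)) := by
      intro t
      rw [hP]
      exact Finset.sum_congr rfl fun m _ => by ring
    rw [intervalIntegral.integral_congr (fun t _ => h0 t)]
    have hint : ∀ m ∈ S, IntervalIntegrable
        (fun t : ℝ => c m * (Real.cos ((n:ℝ)*t) ^ (m 0) * Real.cos (((n:ℝ)+(p:ℝ))*t) ^ (m 1)))
        volume 0 π := by
      intro m _
      apply Continuous.intervalIntegrable
      fun_prop
    rw [intervalIntegral.integral_finset_sum hint]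
    rw [Finset.mul_sum]
    refine Finset.sum_congr rfl fun m hm => ?_
    have ha : m 0 ≤ D := Finset.le_sup (f := fun m => m 0) hm
    have hr := R_eq n p hn hcop D (m 0) (m 1) ha
    rw [intervalIntegral.integral_const_mul]
    linear_combination (c m) * hr
  rw [hLHS, hRHS]
  have key : ∀ j ∈ Finset.range D,
      ∑ m ∈ S, c m * (Sq (m 0) (((j:ℤ)+1) * ((n:ℤ)+(p:ℤ))) * Sq (m 1) (((j:ℤ)+1) * (n:ℤ))) = 0 := by
    intro j _
    have := hORT (j+1) (by omega)
    simp only [Nat.cast_add, Nat.cast_one] at this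
    exact this
  calc ∑ m ∈ S, c m * (Sq (m 0) 0 * Sq (m 1) 0)
      = ∑ m ∈ S, c m * (Sq (m 0) 0 * Sq (m 1) 0) + 2 * ∑ j ∈ Finset.range D, (0:ℝ) := by
        simp
    _ = ∑ m ∈ S, c m * (Sq (m 0) 0 * Sq (m 1) 0)
        + 2 * ∑ j ∈ Finset.range D, ∑ m ∈ S,
            c m * (Sq (m 0) (((j:ℤ)+1) * ((n:ℤ)+(p:ℤ))) * Sq (m 1) (((j:ℤ)+1) * (n:ℤ))) := by
        congr 1
        rw [Finset.sum_congr rfl key]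
    _ = ∑ m ∈ S, (c m * (Sq (m 0) 0 * Sq (m 1) 0)
        + ∑ j ∈ Finset.range D,
            2 * (c m * (Sq (m 0) (((j:ℤ)+1) * ((n:ℤ)+(p:ℤ))) * Sq (m 1) (((j:ℤ)+1) * (n:ℤ))))) := by
        rw [Finset.sum_add_distrib, Finset.sum_comm (s := Finset.range D) (t := S)]
        congr 1
        rw [Finset.mul_sum]
        exact Finset.sum_congr rfl fun m _ => by rw [Finset.mul_sum]
    _ = ∑ m ∈ S, c m * (Sq (m 0) 0 * Sq (m 1) 0
        + 2 * ∑ j ∈ Finset.range D,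
            Sq (m 0) (((j:ℤ)+1) * ((n:ℤ)+(p:ℤ))) * Sq (m 1) (((j:ℤ)+1) * (n:ℤ))) := by
        refine Finset.sum_congr rfl fun m _ => ?_
        rw [mul_add, Finset.mul_sum, Finset.mul_sum]
        congr 1
        refine Finset.sum_congr rfl fun j _ => ?_
        ring
end

section
/- Let n, p be positive integers with gcd(n, n+p) = 1. The functions e_{i,j}(t) = T̂_i(cos(nt))·T̂_j(cos((n+p)t)) indexed by (i,j) ∈ Γ_{n,p}^L = {(i,j) ∈ ℕ₀² : i/(n+p) + j/n < 1} ∪ {(0,n)} form an orthonormal system in L²([0,π]) with inner product (1/π)∫₀^π q₁(t)q₂(t) dt. -/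
open Real


lemma contk (k : ℤ) : Continuous (fun t : ℝ => Real.cos (k*t)) :=
  Real.continuous_cos.comp (continuous_const.mul continuous_id)

lemma int_cos_k (k : ℤ) : ∫ t in (0:ℝ)..π, Real.cos (k*t) = if k = 0 then π else 0 := by
  rcases eq_or_ne k 0 with h|h
  · simp [h, pi_pos.le]
  · have hk : (k:ℝ) ≠ 0 := Int.cast_ne_zero.mpr h
    rw [if_neg h, intervalIntegral.integral_comp_mul_left _ hk]
    simp [integral_cos, Real.sin_int_mul_pi]

lemma cc (A B : ℤ) : ∫ t in (0:ℝ)..π, Real.cos (A*t) * Real.cos (B*t)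
    = ((if A = B then π else 0) + (if A = -B then π else 0))/2 := by
  have hpt : ∀ t : ℝ, Real.cos (A*t) * Real.cos (B*t)
      = (Real.cos (((A-B : ℤ))*t) + Real.cos (((A+B : ℤ))*t))/2 := by
    intro t
    push_cast
    rw [sub_mul, add_mul, Real.cos_sub, Real.cos_add]
    ring
  rw [intervalIntegral.integral_congr (fun t _ => hpt t)]
  rw [intervalIntegral.integral_div, intervalIntegral.integral_add
    ((contk _).intervalIntegrable _ _) ((contk _).intervalIntegrable _ _)]
  rw [int_cos_k, int_cos_k]
  congr 2
  · simp [sub_eq_zero]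
  · simp [add_eq_zero_iff_eq_neg]

noncomputable def chi (A B : ℤ) : ℝ := (if A = B then (1:ℝ) else 0) + (if A = -B then 1 else 0)

lemma four (a b c d : ℤ) :
    ∫ t in (0:ℝ)..π, (Real.cos (a*t) * Real.cos (b*t)) * (Real.cos (c*t) * Real.cos (d*t))
    = (π/8) * (chi (a-b) (c-d) + chi (a-b) (c+d) + chi (a+b) (c-d) + chi (a+b) (c+d)) := by
  have hpt : ∀ t : ℝ, (Real.cos (a*t) * Real.cos (b*t)) * (Real.cos (c*t) * Real.cos (d*t))
      = (Real.cos ((a-b : ℤ)*t) * Real.cos ((c-d : ℤ)*t)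
        + Real.cos ((a-b : ℤ)*t) * Real.cos ((c+d : ℤ)*t)
        + Real.cos ((a+b : ℤ)*t) * Real.cos ((c-d : ℤ)*t)
        + Real.cos ((a+b : ℤ)*t) * Real.cos ((c+d : ℤ)*t))/4 := by
    intro t
    push_cast
    rw [sub_mul, add_mul, sub_mul, add_mul, Real.cos_sub, Real.cos_add, Real.cos_sub,
      Real.cos_add]
    ring
  have hi : ∀ A B : ℤ, IntervalIntegrable
      (fun t => Real.cos (A*t) * Real.cos (B*t)) MeasureTheory.volume (0:ℝ) π :=
    fun A B => ((contk A).mul (contk B)).intervalIntegrable _ _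
  rw [intervalIntegral.integral_congr (fun t _ => hpt t), intervalIntegral.integral_div,
    intervalIntegral.integral_add (((hi _ _).add (hi _ _)).add (hi _ _)) (hi _ _),
    intervalIntegral.integral_add ((hi _ _).add (hi _ _)) (hi _ _),
    intervalIntegral.integral_add (hi _ _) (hi _ _), cc, cc, cc, cc]
  unfold chi
  split_ifs <;> ring
lemma chi_zero {A B : ℤ} (h1 : ¬(A = B)) (h2 : ¬(A = -B)) : chi A B = 0 := by
  simp [chi, h1, h2]
lemma chi_two {A B : ℤ} (h1 : A = 0) (h2 : B = 0) : chi A B = 2 := by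
  simp [chi, h1, h2]; norm_num

lemma keydvd (n p : ℕ) (hn : 0 < n) (hcop : Nat.Coprime n (n+p)) (x y : ℤ)
    (h : x*(n:ℤ) = y*((n:ℤ)+(p:ℤ))) : ∃ k : ℤ, x = k*((n:ℤ)+(p:ℤ)) ∧ y = k*(n:ℤ) := by
  have hc : IsCoprime ((n:ℤ)+(p:ℤ)) (n:ℤ) := by
    have : IsCoprime ((n:ℕ):ℤ) (((n+p:ℕ)):ℤ) := Nat.isCoprime_iff_coprime.mpr hcop
    have := this.symm
    push_cast at this
    exact this
  have hdvd : ((n:ℤ)+(p:ℤ)) ∣ x * (n:ℤ) := ⟨y, by linarith [h]⟩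
  obtain ⟨k, hk⟩ := hc.dvd_of_dvd_mul_right hdvd
  rw [mul_comm] at hk
  refine ⟨k, hk, ?_⟩
  have hM : ((n:ℤ)+(p:ℤ)) ≠ 0 := by positivity
  have : (k*(n:ℤ)) * ((n:ℤ)+(p:ℤ)) = y * ((n:ℤ)+(p:ℤ)) := by rw [← h, hk]; ring
  exact (mul_right_cancel₀ hM this).symm

lemma key0 (n p : ℕ) (hn : 0 < n) (hcop : Nat.Coprime n (n+p)) (x y : ℤ)
    (hx : |x| < (n:ℤ)+(p:ℤ)) (h : x*(n:ℤ) = y*((n:ℤ)+(p:ℤ))) : x = 0 ∧ y = 0 := by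
  obtain ⟨k, hk, hk'⟩ := keydvd n p hn hcop x y h
  have hM : (0:ℤ) < (n:ℤ)+(p:ℤ) := by positivity
  have hk0 : k = 0 := by
    by_contra hkne
    have : (1:ℤ) ≤ |k| := Int.one_le_abs (by omega)
    have : (n:ℤ)+(p:ℤ) ≤ |x| := by
      rw [hk, abs_mul, abs_of_pos hM]
      nlinarith
    omega
  constructor <;> simp [hk, hk', hk0]

lemma key1 (n p : ℕ) (hn : 0 < n) (hcop : Nat.Coprime n (n+p)) (x y : ℤ)
    (hx0 : 0 ≤ x) (hx : x < 2*((n:ℤ)+(p:ℤ))) (h : x*(n:ℤ) = y*((n:ℤ)+(p:ℤ))) :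
    (x = 0 ∧ y = 0) ∨ (x = (n:ℤ)+(p:ℤ) ∧ y = (n:ℤ)) := by
  obtain ⟨k, hk, hk'⟩ := keydvd n p hn hcop x y h
  have hM : (0:ℤ) < (n:ℤ)+(p:ℤ) := by positivity
  have hk0 : 0 ≤ k := by nlinarith
  have hk2 : k < 2 := by nlinarith
  interval_cases k
  · left; constructor <;> simp_all
  · right; constructor <;> simp_all

lemma chi_sum (n p i j i' j' : ℕ) (hn : 0 < n) (hp : 0 < p)
    (hcop : Nat.Coprime n (n+p))
    (hD : (i < n+p ∧ j < n ∧ (i:ℝ)/((n:ℝ)+(p:ℝ))+(j:ℝ)/(n:ℝ) < 1) ∨ (i = 0 ∧ j = n))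
    (hD' : (i' < n+p ∧ j' < n ∧ (i':ℝ)/((n:ℝ)+(p:ℝ))+(j':ℝ)/(n:ℝ) < 1) ∨ (i' = 0 ∧ j' = n)) :
    chi ((i:ℤ)*(n:ℤ) - (i':ℤ)*(n:ℤ)) ((j:ℤ)*((n:ℤ)+(p:ℤ)) - (j':ℤ)*((n:ℤ)+(p:ℤ)))
    + chi ((i:ℤ)*(n:ℤ) - (i':ℤ)*(n:ℤ)) ((j:ℤ)*((n:ℤ)+(p:ℤ)) + (j':ℤ)*((n:ℤ)+(p:ℤ)))
    + chi ((i:ℤ)*(n:ℤ) + (i':ℤ)*(n:ℤ)) ((j:ℤ)*((n:ℤ)+(p:ℤ)) - (j':ℤ)*((n:ℤ)+(p:ℤ)))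
    + chi ((i:ℤ)*(n:ℤ) + (i':ℤ)*(n:ℤ)) ((j:ℤ)*((n:ℤ)+(p:ℤ)) + (j':ℤ)*((n:ℤ)+(p:ℤ)))
    = if i = i' ∧ j = j' then 2*(if i = 0 then 2 else 1)*(if j = 0 then 2 else 1) else 0 := by
  have hNpos : (0:ℤ) < (n:ℤ) := by exact_mod_cast hn
  have hMpos : (0:ℤ) < (n:ℤ)+(p:ℤ) := by positivity
  have hiM : (i:ℤ) < (n:ℤ)+(p:ℤ) := by rcases hD with ⟨h1,_,_⟩|⟨h1,_⟩ <;> omega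
  have hi'M : (i':ℤ) < (n:ℤ)+(p:ℤ) := by rcases hD' with ⟨h1,_,_⟩|⟨h1,_⟩ <;> omega
  have hjN : (j:ℤ) ≤ (n:ℤ) := by rcases hD with ⟨_,h1,_⟩|⟨_,h1⟩ <;> omega
  have hj'N : (j':ℤ) ≤ (n:ℤ) := by rcases hD' with ⟨_,h1,_⟩|⟨_,h1⟩ <;> omega
  by_cases hd : i = i' ∧ j = j'
  · obtain ⟨rfl, rfl⟩ := hd
    rw [if_pos ⟨rfl, rfl⟩]
    rcases Nat.eq_zero_or_pos i with hi0|hipos <;> rcases Nat.eq_zero_or_pos j with hj0|hjpos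
    · have hXz : (i:ℤ)*(n:ℤ) = 0 := by rw [hi0]; norm_num
      have hYz : (j:ℤ)*((n:ℤ)+(p:ℤ)) = 0 := by rw [hj0]; norm_num
      rw [chi_two (by ring) (by ring),
        chi_two (by ring) (by rw [hYz]; norm_num),
        chi_two (by rw [hXz]; norm_num) (by ring),
        chi_two (by rw [hXz]; norm_num) (by rw [hYz]; norm_num)]
      simp [hi0, hj0]; norm_num
    · have hXz : (i:ℤ)*(n:ℤ) = 0 := by rw [hi0]; norm_num
      have hYp : (0:ℤ) < (j:ℤ)*((n:ℤ)+(p:ℤ)) := by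
        have : (0:ℤ) < (j:ℤ) := by exact_mod_cast hjpos
        positivity
      rw [chi_two (by ring) (by ring),
        chi_zero (by intro h; linarith) (by intro h; linarith),
        chi_two (by rw [hXz]; norm_num) (by ring),
        chi_zero (by intro h; linarith) (by intro h; linarith)]
      simp [hi0, hjpos.ne']; norm_num
    · have hYz : (j:ℤ)*((n:ℤ)+(p:ℤ)) = 0 := by rw [hj0]; norm_num
      have hXp : (0:ℤ) < (i:ℤ)*(n:ℤ) := by
        have : (0:ℤ) < (i:ℤ) := by exact_mod_cast hipos
        positivity
      rw [chi_two (by ring) (by ring),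
        chi_two (by ring) (by rw [hYz]; norm_num),
        chi_zero (by intro h; linarith) (by intro h; linarith),
        chi_zero (by intro h; linarith) (by intro h; linarith)]
      simp [hipos.ne', hj0]; norm_num
    · have hXp : (0:ℤ) < (i:ℤ)*(n:ℤ) := by
        have : (0:ℤ) < (i:ℤ) := by exact_mod_cast hipos
        positivity
      have hYp : (0:ℤ) < (j:ℤ)*((n:ℤ)+(p:ℤ)) := by
        have : (0:ℤ) < (j:ℤ) := by exact_mod_cast hjpos
        positivity
      have hc7 : ¬((i:ℤ)*(n:ℤ) + (i:ℤ)*(n:ℤ) = (j:ℤ)*((n:ℤ)+(p:ℤ)) + (j:ℤ)*((n:ℤ)+(p:ℤ))) := by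
        intro h
        have heq : ((i:ℤ))*(n:ℤ) = ((j:ℤ))*((n:ℤ)+(p:ℤ)) := by linarith
        have := key0 n p hn hcop (i:ℤ) (j:ℤ)
          (by rw [abs_of_nonneg (by positivity)]; exact hiM) heq
        omega
      rw [chi_two (by ring) (by ring),
        chi_zero (by intro h; linarith) (by intro h; linarith),
        chi_zero (by intro h; linarith) (by intro h; linarith),
        chi_zero hc7 (by intro h; linarith)]
      simp [hipos.ne', hjpos.ne']
  · rw [if_neg hd]
    have hc1 : ¬((i:ℤ)*(n:ℤ) - (i':ℤ)*(n:ℤ)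
        = (j:ℤ)*((n:ℤ)+(p:ℤ)) - (j':ℤ)*((n:ℤ)+(p:ℤ))) := by
      intro h
      have := key0 n p hn hcop ((i:ℤ)-(i':ℤ)) ((j:ℤ)-(j':ℤ))
        (abs_lt.mpr ⟨by omega, by omega⟩) (by linear_combination h)
      exact hd ⟨by omega, by omega⟩
    have hc2 : ¬((i:ℤ)*(n:ℤ) - (i':ℤ)*(n:ℤ)
        = -((j:ℤ)*((n:ℤ)+(p:ℤ)) - (j':ℤ)*((n:ℤ)+(p:ℤ)))) := by
      intro h
      have := key0 n p hn hcop ((i:ℤ)-(i':ℤ)) ((j':ℤ)-(j:ℤ))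
        (abs_lt.mpr ⟨by omega, by omega⟩) (by linear_combination h)
      exact hd ⟨by omega, by omega⟩
    have hc3 : ¬((i:ℤ)*(n:ℤ) - (i':ℤ)*(n:ℤ)
        = (j:ℤ)*((n:ℤ)+(p:ℤ)) + (j':ℤ)*((n:ℤ)+(p:ℤ))) := by
      intro h
      have := key0 n p hn hcop ((i:ℤ)-(i':ℤ)) ((j:ℤ)+(j':ℤ))
        (abs_lt.mpr ⟨by omega, by omega⟩) (by linear_combination h)
      exact hd ⟨by omega, by omega⟩
    have hc4 : ¬((i:ℤ)*(n:ℤ) - (i':ℤ)*(n:ℤ)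
        = -((j:ℤ)*((n:ℤ)+(p:ℤ)) + (j':ℤ)*((n:ℤ)+(p:ℤ)))) := by
      intro h
      have := key0 n p hn hcop ((i:ℤ)-(i':ℤ)) (-((j:ℤ)+(j':ℤ)))
        (abs_lt.mpr ⟨by omega, by omega⟩) (by linear_combination h)
      exact hd ⟨by omega, by omega⟩
    have hc5 : ¬((i:ℤ)*(n:ℤ) + (i':ℤ)*(n:ℤ)
        = (j:ℤ)*((n:ℤ)+(p:ℤ)) - (j':ℤ)*((n:ℤ)+(p:ℤ))) := by
      intro h
      have := key1 n p hn hcop ((i:ℤ)+(i':ℤ)) ((j:ℤ)-(j':ℤ))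
        (by omega) (by omega) (by linear_combination h)
      rcases this with ⟨h1, h2⟩ | ⟨h1, h2⟩
      · exact hd ⟨by omega, by omega⟩
      · rcases hD with ⟨_, hjlt, _⟩ | ⟨hi0, _⟩ <;> omega
    have hc6 : ¬((i:ℤ)*(n:ℤ) + (i':ℤ)*(n:ℤ)
        = -((j:ℤ)*((n:ℤ)+(p:ℤ)) - (j':ℤ)*((n:ℤ)+(p:ℤ)))) := by
      intro h
      have := key1 n p hn hcop ((i:ℤ)+(i':ℤ)) ((j':ℤ)-(j:ℤ))
        (by omega) (by omega) (by linear_combination h)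
      rcases this with ⟨h1, h2⟩ | ⟨h1, h2⟩
      · exact hd ⟨by omega, by omega⟩
      · rcases hD' with ⟨_, hjlt, _⟩ | ⟨hi0, _⟩ <;> omega
    have hc7 : ¬((i:ℤ)*(n:ℤ) + (i':ℤ)*(n:ℤ)
        = (j:ℤ)*((n:ℤ)+(p:ℤ)) + (j':ℤ)*((n:ℤ)+(p:ℤ))) := by
      intro h
      have := key1 n p hn hcop ((i:ℤ)+(i':ℤ)) ((j:ℤ)+(j':ℤ))
        (by omega) (by omega) (by linear_combination h)
      rcases this with ⟨h1, h2⟩ | ⟨h1, h2⟩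
      · exact hd ⟨by omega, by omega⟩
      · rcases hD with ⟨_, _, hs⟩ | ⟨hi0, _⟩
        · rcases hD' with ⟨_, _, hs'⟩ | ⟨hi0', _⟩
          · have e1 : (i:ℝ)+(i':ℝ) = (n:ℝ)+(p:ℝ) := by exact_mod_cast h1
            have e2 : (j:ℝ)+(j':ℝ) = (n:ℝ) := by exact_mod_cast h2
            have hMr : (0:ℝ) < (n:ℝ)+(p:ℝ) := by positivity
            have hNr : (0:ℝ) < (n:ℝ) := by exact_mod_cast hn
            have d1 : (i:ℝ)/((n:ℝ)+(p:ℝ)) + (i':ℝ)/((n:ℝ)+(p:ℝ)) = 1 := by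
              rw [← add_div, e1, div_self hMr.ne']
            have d2 : (j:ℝ)/(n:ℝ) + (j':ℝ)/(n:ℝ) = 1 := by
              rw [← add_div, e2, div_self hNr.ne']
            linarith
          · omega
        · omega
    have hc8 : ¬((i:ℤ)*(n:ℤ) + (i':ℤ)*(n:ℤ)
        = -((j:ℤ)*((n:ℤ)+(p:ℤ)) + (j':ℤ)*((n:ℤ)+(p:ℤ)))) := by
      intro h
      have := key1 n p hn hcop ((i:ℤ)+(i':ℤ)) (-((j:ℤ)+(j':ℤ)))
        (by omega) (by omega) (by linear_combination h)
      rcases this with ⟨h1, h2⟩ | ⟨h1, h2⟩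
      · exact hd ⟨by omega, by omega⟩
      · omega
    rw [chi_zero hc1 hc2, chi_zero hc3 hc4, chi_zero hc5 hc6, chi_zero hc7 hc8]
    norm_num




open Real

theorem basis_functions_orthonormal (n p : ℕ) (hn : 0 < n) (hp : 0 < p)
    (hcop : Nat.Coprime n (n + p))
    (That : ℕ → ℝ → ℝ)
    (hThat : ∀ m x, That m x =
      if m = 0 then 1 else Real.sqrt 2 * (Polynomial.Chebyshev.T ℝ m).eval x)
    (e : ℕ → ℕ → ℝ → ℝ)
    (he : ∀ i j t, e i j t = That i (Real.cos (n * t)) * That j (Real.cos ((n + p) * t)))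
    (i j i' j' : ℕ)
    (hij : (i : ℝ) / (n + p) + (j : ℝ) / n < 1 ∨ (i, j) = (0, n))
    (hij' : (i' : ℝ) / (n + p) + (j' : ℝ) / n < 1 ∨ (i', j') = (0, n)) :
    (1 / π) * ∫ t in (0 : ℝ)..π, e i j t * e i' j' t =
      if (i, j) = (i', j') then 1 else 0 := by
  have hMr : (0:ℝ) < (n:ℝ)+(p:ℝ) := by positivity
  have hNr : (0:ℝ) < (n:ℝ) := by exact_mod_cast hn
  have hDgen : ∀ a b : ℕ, ((a : ℝ) / (n + p) + (b : ℝ) / n < 1 ∨ (a, b) = (0, n)) →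
      ((a < n+p ∧ b < n ∧ (a:ℝ)/((n:ℝ)+(p:ℝ))+(b:ℝ)/(n:ℝ) < 1) ∨ (a = 0 ∧ b = n)) := by
    intro a b hab
    rcases hab with hs | hsp
    · left
      have h1 : (a:ℝ)/((n:ℝ)+(p:ℝ)) < 1 := by
        have : (0:ℝ) ≤ (b:ℝ)/(n:ℝ) := by positivity
        linarith
      have h2 : (b:ℝ)/(n:ℝ) < 1 := by
        have : (0:ℝ) ≤ (a:ℝ)/((n:ℝ)+(p:ℝ)) := by positivity
        linarith
      have h1' : (a:ℝ) < (n:ℝ)+(p:ℝ) := (div_lt_one hMr).mp h1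
      have h2' : (b:ℝ) < (n:ℝ) := (div_lt_one hNr).mp h2
      refine ⟨by exact_mod_cast h1', by exact_mod_cast h2', hs⟩
    · right
      simpa [Prod.ext_iff] using hsp
  have hD := hDgen i j hij
  have hD' := hDgen i' j' hij'
  have h2 : Real.sqrt 2 * Real.sqrt 2 = 2 := Real.mul_self_sqrt (by norm_num)
  have hfac : ∀ (m : ℕ) (K : ℤ) (c : ℝ), c = (K:ℝ) → ∀ t : ℝ,
      That m (Real.cos (c*t)) = (if m = 0 then (1:ℝ) else Real.sqrt 2)
        * Real.cos ((((m:ℤ)*K : ℤ):ℝ)*t) := by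
    intro m K c hc t
    rw [hThat]
    rcases eq_or_ne m 0 with hm|hm
    · simp [hm]
    · rw [if_neg hm, if_neg hm, hc, Polynomial.Chebyshev.T_real_cos]
      congr 2
      push_cast
      ring
  have hpt : ∀ t : ℝ, e i j t * e i' j' t =
      ((if i = 0 then (1:ℝ) else Real.sqrt 2) * (if i' = 0 then (1:ℝ) else Real.sqrt 2)
        * ((if j = 0 then (1:ℝ) else Real.sqrt 2) * (if j' = 0 then (1:ℝ) else Real.sqrt 2)))
      * ((Real.cos ((((i:ℤ)*(n:ℤ) : ℤ):ℝ)*t) * Real.cos ((((i':ℤ)*(n:ℤ) : ℤ):ℝ)*t))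
        * (Real.cos ((((j:ℤ)*((n:ℤ)+(p:ℤ)) : ℤ):ℝ)*t)
          * Real.cos ((((j':ℤ)*((n:ℤ)+(p:ℤ)) : ℤ):ℝ)*t))) := by
    intro t
    rw [he, he, hfac i (n:ℤ) ((n:ℝ)) (by push_cast; ring) t,
      hfac j ((n:ℤ)+(p:ℤ)) ((n:ℝ)+(p:ℝ)) (by push_cast; ring) t,
      hfac i' (n:ℤ) ((n:ℝ)) (by push_cast; ring) t,
      hfac j' ((n:ℤ)+(p:ℤ)) ((n:ℝ)+(p:ℝ)) (by push_cast; ring) t]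
    ring
  rw [intervalIntegral.integral_congr (fun t _ => hpt t),
    intervalIntegral.integral_const_mul, four,
    chi_sum n p i j i' j' hn hp hcop hD hD']
  simp only [Prod.mk.injEq]
  by_cases hdd : i = i' ∧ j = j'
  · rw [if_pos hdd, if_pos hdd]
    obtain ⟨rfl, rfl⟩ := hdd
    have hπ : π ≠ 0 := pi_ne_zero
    split_ifs with hI hJ hJ <;> (try simp only [h2]) <;> field_simp <;> ring
  · rw [if_neg hdd, if_neg hdd]
    ring
end
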